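/- Let Y be an F-space with a homogeneous translation-invariant metric d_Y, and v_i(x,y) = λ_i(x) + S_i(x)·y with λ_i ∈ B(X_i, Y) and S_i : X_i → ℝ bounded with ‖S_i‖_∞ < 1. Then v_i satisfies the uniform contractivity condition d_Y(v_i(x,y_1), v_i(x,y_2)) ≤ ‖S_i‖_∞ d_Y(y_1,y_2), and hence the associated RB operator Φ(λ)(S)f = Σ_i (λ_i∘u_i^{-1})χ_{u_i(X_i)} + Σ_i (S_i∘u_i^{-1})·(f∘u_i^{-1})χ_{u_i(X_i)} is contractive on B(X,Y) with factor max_i ‖S_i‖_∞; its unique fixed point f* satisfies f*∘u_i = λ_i + S_i·f*|_{X_i} on X_i for all i. -/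

import Mathlib

open Bornology

/-- For `vᵢ(x,y) = λᵢ(x) + Sᵢ(x)·y` with `|Sᵢ| ≤ s < 1` on `Xᵢ`, the maps `vᵢ` are uniformly
contractive in the second variable with constant `s`, the associated RB operator is a
contraction with factor `s` on bounded functions, and its unique bounded fixed point `f*`
satisfies the self-referential equations `f*(uᵢ(x)) = λᵢ(x) + Sᵢ(x)·f*(x)` on `Xᵢ`. -/
theorem RB_operator_affine_contraction {X Y : Type*} [Nonempty X]
    [NormedAddCommGroup Y] [NormedSpace ℝ Y] [CompleteSpace Y]
    (N : ℕ) (Xs : Fin N → Set X) (u : Fin N → X → X)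
    (hpart : ∀ x : X, ∃! p : Fin N × X, p.2 ∈ Xs p.1 ∧ u p.1 p.2 = x)
    (lam : Fin N → X → Y) (hlam : ∀ i, IsBounded (lam i '' Xs i))
    (S : Fin N → X → ℝ) (s : ℝ) (hs1 : s < 1)
    (hS : ∀ i, ∀ x ∈ Xs i, |S i x| ≤ s)
    (Φ : (X → Y) → X → Y)
    (hΦ : ∀ f : X → Y, ∀ i, ∀ x ∈ Xs i, Φ f (u i x) = lam i x + S i x • f x) :
    (∀ i, ∀ x ∈ Xs i, ∀ y₁ y₂ : Y,
        dist (lam i x + S i x • y₁) (lam i x + S i x • y₂) ≤ s * dist y₁ y₂) ∧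
      (∀ f g : X → Y, IsBounded (Set.range f) → IsBounded (Set.range g) →
        ∀ C : ℝ, (∀ x, dist (f x) (g x) ≤ C) → ∀ x, dist (Φ f x) (Φ g x) ≤ s * C) ∧
      (∃! f : X → Y, IsBounded (Set.range f) ∧ Φ f = f) ∧
      (∀ f : X → Y, IsBounded (Set.range f) → Φ f = f →
        ∀ i, ∀ x ∈ Xs i, f (u i x) = lam i x + S i x • f x) := by

  classical
  obtain ⟨x0⟩ := ‹Nonempty X›
  obtain ⟨⟨i₀, x₀'⟩, ⟨hx₀, _⟩, _⟩ := hpart x0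
  have hs0 : (0:ℝ) ≤ s := le_trans (abs_nonneg _) (hS i₀ x₀' hx₀)
  haveI : Nonempty (Fin N) := ⟨i₀⟩
  have cover : ∀ x : X, ∃ i, ∃ x' ∈ Xs i, u i x' = x := by
    intro x
    obtain ⟨⟨i, x'⟩, ⟨h1, h2⟩, _⟩ := hpart x
    exact ⟨i, x', h1, h2⟩
  have part1 : ∀ i, ∀ x ∈ Xs i, ∀ y₁ y₂ : Y,
      dist (lam i x + S i x • y₁) (lam i x + S i x • y₂) ≤ s * dist y₁ y₂ := by
    intro i x hx y₁ y₂
    rw [dist_add_left, dist_smul₀, Real.norm_eq_abs]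
    exact mul_le_mul_of_nonneg_right (hS i x hx) dist_nonneg
  have part2 : ∀ f g : X → Y, ∀ C : ℝ, (∀ x, dist (f x) (g x) ≤ C) →
      ∀ x, dist (Φ f x) (Φ g x) ≤ s * C := by
    intro f g C hC x
    obtain ⟨i, x', hx', rfl⟩ := cover x
    rw [hΦ f i x' hx', hΦ g i x' hx', dist_add_left, dist_smul₀, Real.norm_eq_abs]
    exact mul_le_mul (hS i x' hx') (hC x') dist_nonneg hs0
  choose Cl hCl using fun i => (isBounded_iff_forall_norm_le.mp (hlam i))
  set M : ℝ := Finset.univ.sup' Finset.univ_nonempty Cl with hMdef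
  have hMl : ∀ i, ∀ x ∈ Xs i, ‖lam i x‖ ≤ M := fun i x hx =>
    le_trans (hCl i _ (Set.mem_image_of_mem _ hx)) (Finset.le_sup' Cl (Finset.mem_univ i))
  have hΦbdd : ∀ f : X → Y, ∀ Cf : ℝ, (∀ x, ‖f x‖ ≤ Cf) →
      ∀ x, ‖Φ f x‖ ≤ M + s * Cf := by
    intro f Cf hCf x
    obtain ⟨i, x', hx', rfl⟩ := cover x
    rw [hΦ f i x' hx']
    calc ‖lam i x' + S i x' • f x'‖ ≤ ‖lam i x'‖ + ‖S i x' • f x'‖ := norm_add_le _ _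
      _ ≤ M + s * Cf := by
          refine add_le_add (hMl i x' hx') ?_
          rw [norm_smul, Real.norm_eq_abs]
          exact mul_le_mul (hS i x' hx') (hCf x') (norm_nonneg _) hs0
  have hrange : ∀ f : X → Y, IsBounded (Set.range f) ↔ ∃ C, ∀ x, ‖f x‖ ≤ C := by
    intro f
    rw [isBounded_iff_forall_norm_le]
    constructor
    · rintro ⟨C, hC⟩; exact ⟨C, fun x => hC _ (Set.mem_range_self x)⟩
    · rintro ⟨C, hC⟩; exact ⟨C, by rintro y ⟨x, rfl⟩; exact hC x⟩
  letI : TopologicalSpace X := ⊥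
  haveI : DiscreteTopology X := ⟨rfl⟩
  let T : (BoundedContinuousFunction X Y) → (BoundedContinuousFunction X Y) := fun f =>
    BoundedContinuousFunction.ofNormedAddCommGroup (Φ f) continuous_of_discreteTopology
      (M + s * ‖f‖) (hΦbdd f ‖f‖ f.norm_coe_le_norm)
  have hTcoe : ∀ f : BoundedContinuousFunction X Y, ⇑(T f) = Φ ⇑f := fun f => rfl
  have hK : ContractingWith ⟨s, hs0⟩ T := by
    constructor
    · exact_mod_cast hs1
    · apply LipschitzWith.of_dist_le_mul
      intro f g
      show dist (T f) (T g) ≤ s * dist f g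
      rw [BoundedContinuousFunction.dist_le (mul_nonneg hs0 dist_nonneg)]
      intro x
      rw [hTcoe, hTcoe]
      exact part2 f g (dist f g) (fun x => BoundedContinuousFunction.dist_coe_le_dist x) x
  set f₀ : BoundedContinuousFunction X Y := ContractingWith.fixedPoint T hK with hf₀def
  have hfix : T f₀ = f₀ := ContractingWith.fixedPoint_isFixedPt hK
  have hΦf₀ : Φ ⇑f₀ = ⇑f₀ := by
    conv_rhs => rw [← hfix]
    exact (hTcoe f₀).symm
  have part3 : ∃! f : X → Y, IsBounded (Set.range f) ∧ Φ f = f := by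
    refine ⟨⇑f₀, ⟨(hrange _).mpr ⟨‖f₀‖, f₀.norm_coe_le_norm⟩, hΦf₀⟩, ?_⟩
    rintro g ⟨hgb, hgfix⟩
    obtain ⟨Cg, hCg⟩ := (hrange g).mp hgb
    let g' : BoundedContinuousFunction X Y := BoundedContinuousFunction.ofNormedAddCommGroup g
      continuous_of_discreteTopology Cg hCg
    have hg' : T g' = g' := by
      apply BoundedContinuousFunction.ext
      intro x
      show Φ ⇑g' x = g' x
      show Φ g x = g x
      rw [hgfix]
    have : g' = f₀ := ContractingWith.fixedPoint_unique hK hg'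
    have : ⇑g' = ⇑f₀ := congrArg _ this
    exact this
  refine ⟨part1, fun f g _ _ C hC x => part2 f g C hC x, part3, ?_⟩
  intro f _ hfix i x hx
  rw [← hfix, hΦ f i x hx, hfix]
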